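/- The function (μ,ν) ↦ W₂²(μ,ν) is a negative definite kernel on W₂(ℝ): for any n, any μ₁,…,μₙ ∈ W₂(ℝ) and any c₁,…,cₙ ∈ ℝ with Σ cᵢ = 0, one has Σ_{i,j} cᵢ cⱼ W₂²(μᵢ,μⱼ) ≤ 0. -/

import Mathlib

open MeasureTheory ProbabilityTheory Real BigOperators

open Set Filter
open scoped ENNReal Topology

noncomputable section WsqAux

/-- quantile function -/
def qf (μ : MeasureTheory.Measure ℝ) (t : ℝ) : ℝ := sInf {x | t ≤ ProbabilityTheory.cdf μ x}

/-- Lebesgue on (0,1) -/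
def UU : MeasureTheory.Measure ℝ := volume.restrict (Set.Ioo 0 1)

variable {μ ν : MeasureTheory.Measure ℝ}

lemma qf_set_nonempty [IsProbabilityMeasure μ] {t : ℝ} (ht1 : t < 1) :
    {x | t ≤ cdf μ x}.Nonempty := by
  have h := (tendsto_cdf_atTop μ).eventually (eventually_ge_nhds ht1)
  rcases h.exists with ⟨x, hx⟩
  exact ⟨x, hx⟩

lemma qf_set_bddBelow [IsProbabilityMeasure μ] {t : ℝ} (ht0 : 0 < t) :
    BddBelow {x | t ≤ cdf μ x} := by
  have h := (tendsto_cdf_atBot μ).eventually (eventually_lt_nhds ht0)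
  rcases h.exists with ⟨x, hx⟩
  refine ⟨x, fun y hy => ?_⟩
  by_contra hxy
  push_neg at hxy
  exact absurd (le_trans hy (monotone_cdf μ hxy.le)) (not_le.2 hx)

lemma le_cdf_qf [IsProbabilityMeasure μ] {t : ℝ} (ht0 : 0 < t) (ht1 : t < 1) :
    t ≤ cdf μ (qf μ t) := by
  have hne := qf_set_nonempty (μ := μ) ht1
  have h1 : Tendsto (cdf μ) (𝓝[>] (qf μ t)) (𝓝 (cdf μ (qf μ t))) :=
    ((cdf μ).right_continuous (qf μ t)).mono Ioi_subset_Ici_self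
  refine ge_of_tendsto h1 ?_
  filter_upwards [self_mem_nhdsWithin] with y hy
  obtain ⟨z, hz, hzy⟩ := exists_lt_of_csInf_lt hne hy
  exact le_trans hz (monotone_cdf μ hzy.le)

end WsqAux

section Part2
variable {μ ν : MeasureTheory.Measure ℝ}

lemma qf_le_iff [IsProbabilityMeasure μ] {t x : ℝ} (ht0 : 0 < t) (ht1 : t < 1) :
    qf μ t ≤ x ↔ t ≤ cdf μ x := by
  constructor
  · intro h
    exact le_trans (le_cdf_qf ht0 ht1) (monotone_cdf μ h)
  · intro h
    exact csInf_le (qf_set_bddBelow ht0) h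

lemma cdf_lt_iff [IsProbabilityMeasure μ] {t x : ℝ} (ht0 : 0 < t) (ht1 : t < 1) :
    cdf μ x < t ↔ x < qf μ t := by
  rw [← not_le, ← not_le, not_iff_not, qf_le_iff ht0 ht1]

lemma qf_monotoneOn [IsProbabilityMeasure μ] : MonotoneOn (qf μ) (Set.Ioo 0 1) := by
  intro a ha b hb hab
  exact csInf_le_csInf (qf_set_bddBelow ha.1) (qf_set_nonempty hb.2)
    (fun x hx => le_trans hab hx)

lemma qf_aemeasurable [IsProbabilityMeasure μ] : AEMeasurable (qf μ) UU :=
  aemeasurable_restrict_of_monotoneOn measurableSet_Ioo qf_monotoneOn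

instance : IsProbabilityMeasure UU := by
  constructor
  rw [UU, Measure.restrict_apply MeasurableSet.univ, Set.univ_inter, Real.volume_Ioo]
  norm_num

lemma UU_apply (s : Set ℝ) : UU s = volume (s ∩ Set.Ioo 0 1) :=
  Measure.restrict_apply' measurableSet_Ioo

lemma vol_inter_Iic {c : ℝ} (h0 : 0 ≤ c) (h1 : c ≤ 1) :
    volume (Set.Iic c ∩ Set.Ioo 0 1) = ENNReal.ofReal c := by
  rcases eq_or_lt_of_le h1 with h | h
  · have : Set.Iic c ∩ Set.Ioo 0 1 = Set.Ioo 0 1 := by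
      apply Set.inter_eq_self_of_subset_right
      intro x hx
      exact le_of_lt (h ▸ hx.2)
    rw [this, Real.volume_Ioo, h]
    norm_num
  · have : Set.Iic c ∩ Set.Ioo 0 1 = Set.Ioc 0 c := by
      ext x
      simp only [Set.mem_inter_iff, Set.mem_Iic, Set.mem_Ioo, Set.mem_Ioc]
      exact ⟨fun ⟨hx, h1, _⟩ => ⟨h1, hx⟩, fun ⟨h1, hx⟩ => ⟨hx, h1, lt_of_le_of_lt hx h⟩⟩
    rw [this, Real.volume_Ioc, sub_zero]

lemma vol_inter_Ioi {c : ℝ} (h0 : 0 ≤ c) :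
    volume (Set.Ioi c ∩ Set.Ioo 0 1) = ENNReal.ofReal (1 - c) := by
  have : Set.Ioi c ∩ Set.Ioo 0 1 = Set.Ioo c 1 := by
    ext x
    simp only [Set.mem_inter_iff, Set.mem_Ioi, Set.mem_Ioo]
    exact ⟨fun ⟨hx, _, h1⟩ => ⟨hx, h1⟩, fun ⟨hx, h1⟩ => ⟨hx, lt_of_le_of_lt h0 hx, h1⟩⟩
  rw [this, Real.volume_Ioo]

/-- the fundamental pushforward identity -/
lemma UU_map_qf [IsProbabilityMeasure μ] : UU.map (qf μ) = μ := by
  have hprob : IsProbabilityMeasure (UU.map (qf μ)) :=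
    Measure.isProbabilityMeasure_map qf_aemeasurable
  refine Measure.ext_of_Iic (UU.map (qf μ)) μ (fun a => ?_)
  rw [Measure.map_apply_of_aemeasurable qf_aemeasurable measurableSet_Iic, UU_apply]
  have hset : qf μ ⁻¹' Set.Iic a ∩ Set.Ioo 0 1 = Set.Iic (cdf μ a) ∩ Set.Ioo 0 1 := by
    ext t
    simp only [Set.mem_inter_iff, Set.mem_preimage, Set.mem_Iic, Set.mem_Ioo, and_congr_left_iff]
    intro ht
    rw [qf_le_iff ht.1 ht.2]
  rw [hset, vol_inter_Iic (cdf_nonneg μ a) (cdf_le_one μ a), ofReal_cdf]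

end Part2

section Part3
variable {μ ν : MeasureTheory.Measure ℝ}

lemma one_sub_max {a b : ℝ} : 1 - max a b = min (1 - a) (1 - b) := by
  rw [min_def, max_def]; split_ifs <;> linarith

lemma seq_lt {a : ℝ} (n : ℕ) : a - 1 / (n + 1) < a := by
  have : (0:ℝ) < 1 / (n+1) := by positivity
  linarith

lemma seq_mono {a : ℝ} : Monotone (fun n : ℕ => a - 1 / ((n:ℝ) + 1)) := by
  intro n m hnm
  have h1 : ((n:ℝ) + 1) ≤ ((m:ℝ) + 1) := by
    have := (Nat.cast_le (α := ℝ)).2 hnm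
    linarith
  have h2 : (1:ℝ) / ((m:ℝ)+1) ≤ 1 / ((n:ℝ)+1) :=
    one_div_le_one_div_of_le (by positivity) h1
  linarith

lemma measure_Iio_eq [IsProbabilityMeasure μ] (a : ℝ) :
    μ (Set.Iio a) = ⨆ n : ℕ, ENNReal.ofReal (cdf μ (a - 1/(n+1))) := by
  have hset : Set.Iio a = ⋃ n : ℕ, Set.Iic (a - 1/(n+1)) := by
    ext x
    simp only [Set.mem_Iio, Set.mem_iUnion, Set.mem_Iic]
    constructor
    · intro hx
      obtain ⟨n, hn⟩ := exists_nat_one_div_lt (sub_pos.2 hx)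
      exact ⟨n, by linarith⟩
    · rintro ⟨n, hn⟩
      exact lt_of_le_of_lt hn (seq_lt n)
  rw [hset, Directed.measure_iUnion]
  · exact iSup_congr (fun n => (ofReal_cdf μ _).symm)
  · exact (Monotone.directed_le (fun n m h => Set.Iic_subset_Iic.2 (seq_mono h)))

lemma iSup_min_eq {u v : ℕ → ℝ≥0∞} (hu : Monotone u) (hv : Monotone v) :
    ⨆ n, min (u n) (v n) = min (⨆ n, u n) (⨆ n, v n) := by
  apply le_antisymm
  · exact iSup_le fun n => min_le_min (le_iSup u n) (le_iSup v n)
  · refine le_of_forall_lt fun c hc => ?_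
    obtain ⟨n, hn⟩ := lt_iSup_iff.mp (lt_of_lt_of_le hc (min_le_left _ _))
    obtain ⟨m, hm⟩ := lt_iSup_iff.mp (lt_of_lt_of_le hc (min_le_right _ _))
    refine lt_of_lt_of_le ?_ (le_iSup (fun n => min (u n) (v n)) (max n m))
    exact lt_min (lt_of_lt_of_le hn (hu (le_max_left n m)))
      (lt_of_lt_of_le hm (hv (le_max_right n m)))

/-- monotone (quantile) coupling -/
noncomputable def mc (μ ν : MeasureTheory.Measure ℝ) : MeasureTheory.Measure (ℝ × ℝ) :=
  UU.map (fun t => (qf μ t, qf ν t))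

variable [IsProbabilityMeasure μ] [IsProbabilityMeasure ν]

lemma mc_aemeasurable : AEMeasurable (fun t => (qf μ t, qf ν t)) UU :=
  qf_aemeasurable.prodMk qf_aemeasurable

instance : IsProbabilityMeasure (mc μ ν) := Measure.isProbabilityMeasure_map mc_aemeasurable

lemma mc_apply {S : Set (ℝ × ℝ)} (hS : MeasurableSet S) :
    mc μ ν S = volume ((fun t => (qf μ t, qf ν t)) ⁻¹' S ∩ Set.Ioo 0 1) := by
  rw [mc, Measure.map_apply_of_aemeasurable mc_aemeasurable hS, UU_apply]

lemma mc_fst : (mc μ ν).map Prod.fst = μ := by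
  rw [mc, AEMeasurable.map_map_of_aemeasurable measurable_fst.aemeasurable mc_aemeasurable]
  exact UU_map_qf

lemma mc_snd : (mc μ ν).map Prod.snd = ν := by
  rw [mc, AEMeasurable.map_map_of_aemeasurable measurable_snd.aemeasurable mc_aemeasurable]
  exact UU_map_qf

lemma mc_swap : (mc μ ν).map Prod.swap = mc ν μ := by
  rw [mc, mc, AEMeasurable.map_map_of_aemeasurable measurable_swap.aemeasurable mc_aemeasurable]
  rfl

lemma meas_Ioi (a : ℝ) : μ (Set.Ioi a) = ENNReal.ofReal (1 - cdf μ a) := by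
  have : Set.Ioi a = (Set.Iic a)ᶜ := by simp
  rw [this, measure_compl measurableSet_Iic (measure_ne_top μ _), measure_univ,
    ← ofReal_cdf μ a, ENNReal.ofReal_sub 1 (cdf_nonneg μ a), ENNReal.ofReal_one]

lemma corner1 (a b : ℝ) :
    mc μ ν {p : ℝ × ℝ | a < p.1 ∧ b < p.2} = min (μ (Set.Ioi a)) (ν (Set.Ioi b)) := by
  have hS : MeasurableSet {p : ℝ × ℝ | a < p.1 ∧ b < p.2} :=
    (measurableSet_lt measurable_const measurable_fst).inter
      (measurableSet_lt measurable_const measurable_snd)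
  rw [mc_apply hS]
  have hset : (fun t => (qf μ t, qf ν t)) ⁻¹' {p : ℝ × ℝ | a < p.1 ∧ b < p.2} ∩ Set.Ioo 0 1
      = Set.Ioi (max (cdf μ a) (cdf ν b)) ∩ Set.Ioo 0 1 := by
    ext t
    simp only [Set.mem_inter_iff, Set.mem_preimage, Set.mem_setOf_eq, Set.mem_Ioi, Set.mem_Ioo,
      max_lt_iff, and_congr_left_iff]
    intro ht
    rw [← cdf_lt_iff ht.1 ht.2, ← cdf_lt_iff ht.1 ht.2]
  rw [hset, vol_inter_Ioi (le_trans (cdf_nonneg μ a) (le_max_left _ _)), meas_Ioi, meas_Ioi,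
    one_sub_max]
  exact Monotone.map_min (fun _ _ h => ENNReal.ofReal_le_ofReal h)

lemma corner2 (a b : ℝ) :
    mc μ ν {p : ℝ × ℝ | p.1 < a ∧ p.2 < b} = min (μ (Set.Iio a)) (ν (Set.Iio b)) := by
  have hS : MeasurableSet {p : ℝ × ℝ | p.1 < a ∧ p.2 < b} :=
    (measurableSet_lt measurable_fst measurable_const).inter
      (measurableSet_lt measurable_snd measurable_const)
  rw [mc_apply hS]
  have hset : (fun t => (qf μ t, qf ν t)) ⁻¹' {p : ℝ × ℝ | p.1 < a ∧ p.2 < b} ∩ Set.Ioo 0 1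
      = ⋃ n : ℕ, (Set.Iic (min (cdf μ (a - 1/(n+1))) (cdf ν (b - 1/(n+1)))) ∩ Set.Ioo 0 1) := by
    ext t
    simp only [Set.mem_inter_iff, Set.mem_preimage, Set.mem_setOf_eq, Set.mem_iUnion,
      Set.mem_Iic, Set.mem_Ioo, le_min_iff]
    constructor
    · rintro ⟨⟨h1, h2⟩, ht⟩
      obtain ⟨n, hn⟩ := exists_nat_one_div_lt (sub_pos.2 h1)
      obtain ⟨m, hm⟩ := exists_nat_one_div_lt (sub_pos.2 h2)
      have h1n : qf μ t ≤ a - 1/(max n m + 1) := by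
        have := seq_mono (a := a) (le_max_left n m)
        simp only at this
        push_cast at this ⊢
        linarith
      have h2m : qf ν t ≤ b - 1/(max n m + 1) := by
        have := seq_mono (a := b) (le_max_right n m)
        simp only at this
        push_cast at this ⊢
        linarith
      exact ⟨max n m, ⟨(qf_le_iff ht.1 ht.2).1 h1n, (qf_le_iff ht.1 ht.2).1 h2m⟩, ht⟩
    · rintro ⟨n, ⟨h1, h2⟩, ht⟩
      exact ⟨⟨lt_of_le_of_lt ((qf_le_iff ht.1 ht.2).2 h1) (seq_lt n),
        lt_of_le_of_lt ((qf_le_iff ht.1 ht.2).2 h2) (seq_lt n)⟩, ht⟩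
  rw [hset, Directed.measure_iUnion]
  · have hvol : ∀ n : ℕ, volume (Set.Iic (min (cdf μ (a - 1/(n+1))) (cdf ν (b - 1/(n+1)))) ∩ Set.Ioo 0 1)
        = min (ENNReal.ofReal (cdf μ (a - 1/(n+1)))) (ENNReal.ofReal (cdf ν (b - 1/(n+1)))) := by
      intro n
      rw [vol_inter_Iic (le_min (cdf_nonneg _ _) (cdf_nonneg _ _))
        (le_trans (min_le_left _ _) (cdf_le_one _ _))]
      exact Monotone.map_min (fun _ _ h => ENNReal.ofReal_le_ofReal h)
    simp_rw [hvol]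
    rw [iSup_min_eq, measure_Iio_eq, measure_Iio_eq]
    · exact fun n m h => ENNReal.ofReal_le_ofReal (monotone_cdf μ (seq_mono h))
    · exact fun n m h => ENNReal.ofReal_le_ofReal (monotone_cdf ν (seq_mono h))
  · apply Monotone.directed_le
    intro n m h
    exact Set.inter_subset_inter_left _ (Set.Iic_subset_Iic.2
      (min_le_min (monotone_cdf μ (seq_mono h)) (monotone_cdf ν (seq_mono h))))

lemma measure_Iio_eq_ofReal_ciSup [IsProbabilityMeasure ν] (b : ℝ) :
    ν (Set.Iio b) = ENNReal.ofReal (⨆ n : ℕ, cdf ν (b - 1/(n+1))) := by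
  rw [measure_Iio_eq]
  have hne : (⨆ n : ℕ, ENNReal.ofReal (cdf ν (b - 1/(n+1)))) ≠ ∞ := by
    refine ne_of_lt (lt_of_le_of_lt (iSup_le fun n => ?_) (lt_of_le_of_lt le_rfl ENNReal.one_lt_top))
    exact ENNReal.ofReal_le_one.2 (cdf_le_one _ _)
  have htr : (⨆ n : ℕ, ENNReal.ofReal (cdf ν (b - 1/(n+1)))).toReal
      = ⨆ n : ℕ, cdf ν (b - 1/(n+1)) := by
    rw [ENNReal.toReal_iSup (fun n => ENNReal.ofReal_ne_top)]
    exact iSup_congr fun n => ENNReal.toReal_ofReal (cdf_nonneg _ _)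
  rw [← htr, ENNReal.ofReal_toReal hne]

lemma ciSup_cdf_nonneg (b : ℝ) : 0 ≤ ⨆ n : ℕ, cdf ν (b - 1/(n+1)) :=
  le_ciSup_of_le ⟨1, by rintro x ⟨n, rfl⟩; exact cdf_le_one _ _⟩ 0 (cdf_nonneg _ _)

lemma ciSup_cdf_le_one (b : ℝ) : (⨆ n : ℕ, cdf ν (b - 1/(n+1))) ≤ 1 :=
  ciSup_le fun n => cdf_le_one _ _

lemma corner3 (a b : ℝ) :
    mc μ ν {p : ℝ × ℝ | a < p.1 ∧ b ≤ p.2} = min (μ (Set.Ioi a)) (ν (Set.Ici b)) := by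
  have hS : MeasurableSet {p : ℝ × ℝ | a < p.1 ∧ b ≤ p.2} :=
    (measurableSet_lt measurable_const measurable_fst).inter
      (measurableSet_le measurable_const measurable_snd)
  set c : ℝ := ⨆ n : ℕ, cdf ν (b - 1/(n+1)) with hc
  have hbdd : BddAbove (Set.range (fun n : ℕ => cdf ν (b - 1/(n+1)))) :=
    ⟨1, by rintro x ⟨n, rfl⟩; exact cdf_le_one _ _⟩
  have hc0 : 0 ≤ c := ciSup_cdf_nonneg b
  have hd0 : 0 ≤ max (cdf μ a) c := le_trans hc0 (le_max_right _ _)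
  rw [mc_apply hS]
  set P := (fun t => (qf μ t, qf ν t)) ⁻¹' {p : ℝ × ℝ | a < p.1 ∧ b ≤ p.2} ∩ Set.Ioo 0 1 with hP
  have hlower : Set.Ioi (max (cdf μ a) c) ∩ Set.Ioo 0 1 ⊆ P := by
    rintro t ⟨ht1, ht⟩
    rw [Set.mem_Ioi, max_lt_iff] at ht1
    refine ⟨⟨(cdf_lt_iff ht.1 ht.2).1 ht1.1, ?_⟩, ht⟩
    by_contra hlt
    push_neg at hlt
    obtain ⟨n, hn⟩ := exists_nat_one_div_lt (sub_pos.2 hlt)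
    have : t ≤ cdf ν (b - 1/(n+1)) := (qf_le_iff ht.1 ht.2).1 (by linarith)
    exact absurd (lt_of_le_of_lt (le_trans this (le_ciSup hbdd n)) ht1.2) (lt_irrefl t)
  have hupper : P ⊆ Set.Ici (max (cdf μ a) c) ∩ Set.Ioo 0 1 := by
    rintro t ⟨⟨h1, h2⟩, ht⟩
    refine ⟨max_le (le_of_lt ((cdf_lt_iff ht.1 ht.2).2 h1)) (ciSup_le fun n => ?_), ht⟩
    by_contra hgt
    push_neg at hgt
    have h3 : qf ν t ≤ b - 1/(n+1) := (qf_le_iff ht.1 ht.2).2 hgt.le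
    exact absurd h2 (not_le.2 (lt_of_le_of_lt h3 (seq_lt n)))
  have hvolP : volume P = ENNReal.ofReal (1 - max (cdf μ a) c) := by
    apply le_antisymm
    · refine le_trans (measure_mono hupper) ?_
      have hsub : Set.Ici (max (cdf μ a) c) ∩ Set.Ioo 0 1
          ⊆ (Set.Ioi (max (cdf μ a) c) ∩ Set.Ioo 0 1) ∪ {max (cdf μ a) c} := by
        rintro t ⟨ht1, ht⟩
        rcases eq_or_lt_of_le (Set.mem_Ici.1 ht1) with h | h
        · exact Or.inr (by simp [← h])
        · exact Or.inl ⟨h, ht⟩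
      refine le_trans (measure_mono hsub) (le_trans (measure_union_le _ _) ?_)
      rw [vol_inter_Ioi hd0, Real.volume_singleton, add_zero]
    · rw [← vol_inter_Ioi hd0]
      exact measure_mono hlower
  rw [hvolP]
  have hIci : ν (Set.Ici b) = ENNReal.ofReal (1 - c) := by
    have hcompl : Set.Ici b = (Set.Iio b)ᶜ := by simp
    rw [hcompl, measure_compl measurableSet_Iio (measure_ne_top ν _), measure_univ,
      measure_Iio_eq_ofReal_ciSup, ENNReal.ofReal_sub 1 hc0, ENNReal.ofReal_one]
  rw [hIci, meas_Ioi, one_sub_max]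
  exact Monotone.map_min (fun _ _ h => ENNReal.ofReal_le_ofReal h)

end Part3

section Part4

/-- product of Lebesgue on (0,∞) with itself -/
noncomputable def PPi : MeasureTheory.Measure (ℝ × ℝ) :=
  (volume.restrict (Set.Ioi 0)).prod (volume.restrict (Set.Ioi 0))

/-- upper-right corner functional -/
instance : SFinite PPi := by unfold PPi; infer_instance

noncomputable def EPP (m : MeasureTheory.Measure (ℝ × ℝ)) : ℝ≥0∞ :=
  ∫⁻ q, m {p : ℝ × ℝ | q.1 < p.1 ∧ q.2 < p.2} ∂PPi

lemma lint_mul (m : MeasureTheory.Measure (ℝ × ℝ)) [SFinite m] :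
    ∫⁻ p, ENNReal.ofReal p.1 * ENNReal.ofReal p.2 ∂m = EPP m := by
  classical
  set f : (ℝ × ℝ) → (ℝ × ℝ) → ℝ≥0∞ :=
    fun p q => Set.indicator {x : ℝ × ℝ | x.1 < p.1 ∧ x.2 < p.2} 1 q with hf
  have hmeas : AEMeasurable (Function.uncurry f) (m.prod PPi) := by
    have : Function.uncurry f = Set.indicator
        {x : (ℝ × ℝ) × (ℝ × ℝ) | x.2.1 < x.1.1 ∧ x.2.2 < x.1.2} 1 := by
      funext x
      simp only [Function.uncurry, hf, Set.indicator, Set.mem_setOf_eq, Pi.one_apply]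
    rw [this]
    exact (Measurable.indicator measurable_one
      ((measurableSet_lt (measurable_fst.comp measurable_snd)
        (measurable_fst.comp measurable_fst)).inter
       (measurableSet_lt (measurable_snd.comp measurable_snd)
        (measurable_snd.comp measurable_fst)))).aemeasurable
  have h1 : ∀ p : ℝ × ℝ, ENNReal.ofReal p.1 * ENNReal.ofReal p.2 = ∫⁻ q, f p q ∂PPi := by
    intro p
    have hSm : MeasurableSet {x : ℝ × ℝ | x.1 < p.1 ∧ x.2 < p.2} :=
      (measurableSet_lt measurable_fst measurable_const).inter
        (measurableSet_lt measurable_snd measurable_const)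
    rw [hf]
    rw [MeasureTheory.lintegral_indicator_one hSm]
    have hprod : {x : ℝ × ℝ | x.1 < p.1 ∧ x.2 < p.2} = Set.Iio p.1 ×ˢ Set.Iio p.2 := by
      ext x; simp [Set.mem_prod]
    rw [hprod, PPi, Measure.prod_prod, Measure.restrict_apply measurableSet_Iio,
      Measure.restrict_apply measurableSet_Iio]
    rw [Set.inter_comm, Set.Ioi_inter_Iio, Set.inter_comm (Set.Iio p.2), Set.Ioi_inter_Iio,
      Real.volume_Ioo, Real.volume_Ioo, sub_zero, sub_zero]
  calc ∫⁻ p, ENNReal.ofReal p.1 * ENNReal.ofReal p.2 ∂m = ∫⁻ p, ∫⁻ q, f p q ∂PPi ∂m := by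
        exact lintegral_congr h1
    _ = ∫⁻ q, ∫⁻ p, f p q ∂m ∂PPi := MeasureTheory.lintegral_lintegral_swap hmeas
    _ = EPP m := by
        refine lintegral_congr fun q => ?_
        have h2 : ∀ p, f p q = Set.indicator {p : ℝ × ℝ | q.1 < p.1 ∧ q.2 < p.2} 1 p := by
          intro p
          simp only [hf, Set.indicator, Set.mem_setOf_eq, Pi.one_apply]
        rw [lintegral_congr h2]
        exact MeasureTheory.lintegral_indicator_one
          ((measurableSet_lt measurable_const measurable_fst).inter
            (measurableSet_lt measurable_const measurable_snd))

lemma ofReal_mul_split (x y : ℝ) :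
    ENNReal.ofReal (x * y) = ENNReal.ofReal x * ENNReal.ofReal y
      + ENNReal.ofReal (-x) * ENNReal.ofReal (-y) := by
  rcases le_or_gt 0 x with hx | hx <;> rcases le_or_gt 0 y with hy | hy
  · rw [ENNReal.ofReal_mul hx, ENNReal.ofReal_of_nonpos (neg_nonpos.2 hx), zero_mul, add_zero]
  · rw [ENNReal.ofReal_of_nonpos (mul_nonpos_iff.2 (Or.inl ⟨hx, hy.le⟩)),
      ENNReal.ofReal_of_nonpos hy.le, mul_zero,
      ENNReal.ofReal_of_nonpos (neg_nonpos.2 hx), zero_mul, add_zero]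
  · rw [ENNReal.ofReal_of_nonpos (mul_nonpos_iff.2 (Or.inr ⟨hx.le, hy⟩)),
      ENNReal.ofReal_of_nonpos hx.le, zero_mul,
      ENNReal.ofReal_of_nonpos (neg_nonpos.2 hy), mul_zero, add_zero]
  · have hxy : x * y = (-x) * (-y) := by ring
    rw [hxy, ENNReal.ofReal_mul (neg_nonneg.2 hx.le), ENNReal.ofReal_of_nonpos hx.le, zero_mul,
      zero_add]

def negb : ℝ × ℝ → ℝ × ℝ := fun p => (-p.1, -p.2)
def neg1 : ℝ × ℝ → ℝ × ℝ := fun p => (-p.1, p.2)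
def neg2 : ℝ × ℝ → ℝ × ℝ := fun p => (p.1, -p.2)

lemma negb_measurable : Measurable negb := (measurable_fst.neg).prodMk (measurable_snd.neg)
lemma neg1_measurable : Measurable neg1 := (measurable_fst.neg).prodMk measurable_snd
lemma neg2_measurable : Measurable neg2 := measurable_fst.prodMk (measurable_snd.neg)

lemma pos_part_eq (m : MeasureTheory.Measure (ℝ × ℝ)) [IsProbabilityMeasure m] :
    ∫⁻ p, ENNReal.ofReal (p.1 * p.2) ∂m = EPP m + EPP (m.map negb) := by
  have := Measure.isProbabilityMeasure_map (μ := m) negb_measurable.aemeasurable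
  rw [← lint_mul m, ← lint_mul (m.map negb), lintegral_map (f := fun p : ℝ × ℝ => ENNReal.ofReal p.1 * ENNReal.ofReal p.2)
    (measurable_fst.ennreal_ofReal.mul measurable_snd.ennreal_ofReal) negb_measurable]
  rw [← lintegral_add_left (f := fun p : ℝ × ℝ => ENNReal.ofReal p.1 * ENNReal.ofReal p.2) (measurable_fst.ennreal_ofReal.mul measurable_snd.ennreal_ofReal)]
  exact lintegral_congr fun p => ofReal_mul_split p.1 p.2

lemma neg_part_eq (m : MeasureTheory.Measure (ℝ × ℝ)) [IsProbabilityMeasure m] :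
    ∫⁻ p, ENNReal.ofReal (-(p.1 * p.2)) ∂m = EPP (m.map neg2) + EPP (m.map neg1) := by
  have h2 := Measure.isProbabilityMeasure_map (μ := m) neg2_measurable.aemeasurable
  have h1 := Measure.isProbabilityMeasure_map (μ := m) neg1_measurable.aemeasurable
  rw [← lint_mul (m.map neg2), ← lint_mul (m.map neg1), lintegral_map (f := fun p : ℝ × ℝ => ENNReal.ofReal p.1 * ENNReal.ofReal p.2)
    (measurable_fst.ennreal_ofReal.mul measurable_snd.ennreal_ofReal) neg2_measurable,
    lintegral_map (f := fun p : ℝ × ℝ => ENNReal.ofReal p.1 * ENNReal.ofReal p.2)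
    (measurable_fst.ennreal_ofReal.mul measurable_snd.ennreal_ofReal) neg1_measurable]
  rw [← lintegral_add_left]
  · refine lintegral_congr fun p => ?_
    have := ofReal_mul_split p.1 (-p.2)
    simp only [neg2, neg1, neg_neg] at this ⊢
    rw [show -(p.1 * p.2) = p.1 * (-p.2) by ring, this]
  · exact (measurable_fst.ennreal_ofReal.mul (measurable_snd.neg.ennreal_ofReal))

end Part4

section Part5
variable {μ ν : MeasureTheory.Measure ℝ} [IsProbabilityMeasure μ] [IsProbabilityMeasure ν]
variable {m : MeasureTheory.Measure (ℝ × ℝ)}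

lemma coupling_prob (hf : m.map Prod.fst = μ) : IsProbabilityMeasure m := by
  constructor
  have h := Measure.map_apply (μ := m) measurable_fst MeasurableSet.univ
  rw [hf] at h
  rw [← Set.preimage_univ (f := (Prod.fst : ℝ × ℝ → ℝ)), ← h, measure_univ]

lemma marg_fst (hf : m.map Prod.fst = μ) {s : Set ℝ} (hs : MeasurableSet s) :
    m {p : ℝ × ℝ | p.1 ∈ s} = μ s := by
  rw [← hf, Measure.map_apply measurable_fst hs]; rfl

lemma marg_snd (hs' : m.map Prod.snd = ν) {s : Set ℝ} (hs : MeasurableSet s) :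
    m {p : ℝ × ℝ | p.2 ∈ s} = ν s := by
  rw [← hs', Measure.map_apply measurable_snd hs]; rfl

lemma cmp1 (hf : m.map Prod.fst = μ) (hs : m.map Prod.snd = ν) (a b : ℝ) :
    m {p : ℝ × ℝ | a < p.1 ∧ b < p.2} ≤ mc μ ν {p : ℝ × ℝ | a < p.1 ∧ b < p.2} := by
  rw [corner1]
  refine le_min ?_ ?_
  · exact le_trans (measure_mono (fun p hp => hp.1)) (le_of_eq (marg_fst hf measurableSet_Ioi))
  · exact le_trans (measure_mono (fun p hp => hp.2)) (le_of_eq (marg_snd hs measurableSet_Ioi))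

lemma cmp2 (hf : m.map Prod.fst = μ) (hs : m.map Prod.snd = ν) (a b : ℝ) :
    m {p : ℝ × ℝ | p.1 < a ∧ p.2 < b} ≤ mc μ ν {p : ℝ × ℝ | p.1 < a ∧ p.2 < b} := by
  rw [corner2]
  refine le_min ?_ ?_
  · exact le_trans (measure_mono (fun p hp => hp.1)) (le_of_eq (marg_fst hf measurableSet_Iio))
  · exact le_trans (measure_mono (fun p hp => hp.2)) (le_of_eq (marg_snd hs measurableSet_Iio))

lemma split_corner (w : MeasureTheory.Measure (ℝ × ℝ)) [IsFiniteMeasure w]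
    (hf : w.map Prod.fst = μ) (a b : ℝ) :
    w {p : ℝ × ℝ | a < p.1 ∧ p.2 < b} = μ (Set.Ioi a) - w {p : ℝ × ℝ | a < p.1 ∧ b ≤ p.2} := by
  have hB : MeasurableSet {p : ℝ × ℝ | a < p.1 ∧ b ≤ p.2} :=
    (measurableSet_lt measurable_const measurable_fst).inter
      (measurableSet_le measurable_const measurable_snd)
  have hdisj : Disjoint {p : ℝ × ℝ | a < p.1 ∧ p.2 < b} {p : ℝ × ℝ | a < p.1 ∧ b ≤ p.2} := by
    rw [Set.disjoint_left]
    rintro p ⟨_, h2⟩ ⟨_, h4⟩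
    exact absurd h4 (not_le.2 h2)
  have hunion : {p : ℝ × ℝ | a < p.1 ∧ p.2 < b} ∪ {p : ℝ × ℝ | a < p.1 ∧ b ≤ p.2}
      = {p : ℝ × ℝ | p.1 ∈ Set.Ioi a} := by
    ext p
    simp only [Set.mem_union, Set.mem_setOf_eq, Set.mem_Ioi]
    rcases lt_or_ge p.2 b with h | h
    · tauto
    · tauto
  have hsum := measure_union (μ := w) hdisj hB
  rw [hunion, marg_fst hf measurableSet_Ioi] at hsum
  exact ENNReal.eq_sub_of_add_eq (measure_ne_top w _) hsum.symm

lemma cmp_mixed (hf : m.map Prod.fst = μ) (hs : m.map Prod.snd = ν) (a b : ℝ) :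
    mc μ ν {p : ℝ × ℝ | a < p.1 ∧ p.2 < b} ≤ m {p : ℝ × ℝ | a < p.1 ∧ p.2 < b} := by
  have : IsProbabilityMeasure m := coupling_prob hf
  rw [split_corner (mc μ ν) mc_fst a b, split_corner m hf a b]
  refine tsub_le_tsub_left ?_ _
  rw [corner3]
  refine le_min ?_ ?_
  · exact le_trans (measure_mono (fun p hp => hp.1)) (le_of_eq (marg_fst hf measurableSet_Ioi))
  · exact le_trans (measure_mono (fun p hp => hp.2)) (le_of_eq (marg_snd hs measurableSet_Ici))

end Part5

section Part6
variable {μ ν : MeasureTheory.Measure ℝ} [IsProbabilityMeasure μ] [IsProbabilityMeasure ν]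
variable {m : MeasureTheory.Measure (ℝ × ℝ)}

lemma corner_meas (a b : ℝ) : MeasurableSet {p : ℝ × ℝ | a < p.1 ∧ b < p.2} :=
  (measurableSet_lt measurable_const measurable_fst).inter
    (measurableSet_lt measurable_const measurable_snd)

lemma map_negb_corner (w : MeasureTheory.Measure (ℝ × ℝ)) (q : ℝ × ℝ) :
    (w.map negb) {p : ℝ × ℝ | q.1 < p.1 ∧ q.2 < p.2}
      = w {p : ℝ × ℝ | p.1 < -q.1 ∧ p.2 < -q.2} := by
  rw [Measure.map_apply negb_measurable (corner_meas q.1 q.2)]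
  congr 1
  ext p
  simp only [Set.mem_preimage, negb, Set.mem_setOf_eq]
  constructor
  · rintro ⟨h1, h2⟩; exact ⟨lt_neg.1 (by simpa using h1), lt_neg.1 (by simpa using h2)⟩
  · rintro ⟨h1, h2⟩; exact ⟨lt_neg.1 (by simpa using h1), lt_neg.1 (by simpa using h2)⟩

lemma map_neg2_corner (w : MeasureTheory.Measure (ℝ × ℝ)) (q : ℝ × ℝ) :
    (w.map neg2) {p : ℝ × ℝ | q.1 < p.1 ∧ q.2 < p.2}
      = w {p : ℝ × ℝ | q.1 < p.1 ∧ p.2 < -q.2} := by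
  rw [Measure.map_apply neg2_measurable (corner_meas q.1 q.2)]
  congr 1
  ext p
  simp only [Set.mem_preimage, neg2, Set.mem_setOf_eq]
  constructor
  · rintro ⟨h1, h2⟩; exact ⟨h1, lt_neg.1 (by simpa using h2)⟩
  · rintro ⟨h1, h2⟩; exact ⟨h1, lt_neg.1 (by simpa using h2)⟩

lemma map_neg1_corner (w : MeasureTheory.Measure (ℝ × ℝ)) (q : ℝ × ℝ) :
    (w.map neg1) {p : ℝ × ℝ | q.1 < p.1 ∧ q.2 < p.2}
      = (w.map Prod.swap) {p : ℝ × ℝ | q.2 < p.1 ∧ p.2 < -q.1} := by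
  have hmeas2 : MeasurableSet {p : ℝ × ℝ | q.2 < p.1 ∧ p.2 < -q.1} :=
    (measurableSet_lt measurable_const measurable_fst).inter
      (measurableSet_lt measurable_snd measurable_const)
  rw [Measure.map_apply neg1_measurable (corner_meas q.1 q.2),
    Measure.map_apply measurable_swap hmeas2]
  congr 1
  ext p
  simp only [Set.mem_preimage, neg1, Prod.fst_swap, Prod.snd_swap, Set.mem_setOf_eq]
  constructor
  · rintro ⟨h1, h2⟩; exact ⟨h2, lt_neg.1 (by simpa using h1)⟩
  · rintro ⟨h1, h2⟩; exact ⟨lt_neg.1 (by simpa using h2), h1⟩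

lemma swap_coupling_fst (hs : m.map Prod.snd = ν) : (m.map Prod.swap).map Prod.fst = ν := by
  rw [Measure.map_map measurable_fst measurable_swap]
  exact hs

lemma swap_coupling_snd (hf : m.map Prod.fst = μ) : (m.map Prod.swap).map Prod.snd = μ := by
  rw [Measure.map_map measurable_snd measurable_swap]
  exact hf

lemma cmpA (hf : m.map Prod.fst = μ) (hs : m.map Prod.snd = ν) :
    ∫⁻ p, ENNReal.ofReal (p.1 * p.2) ∂m ≤ ∫⁻ p, ENNReal.ofReal (p.1 * p.2) ∂(mc μ ν) := by
  have : IsProbabilityMeasure m := coupling_prob hf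
  rw [pos_part_eq m, pos_part_eq (mc μ ν)]
  refine add_le_add ?_ ?_
  · exact lintegral_mono fun q => cmp1 hf hs q.1 q.2
  · refine lintegral_mono fun q => ?_
    rw [map_negb_corner m q, map_negb_corner (mc μ ν) q]
    exact cmp2 hf hs (-q.1) (-q.2)

lemma cmpB (hf : m.map Prod.fst = μ) (hs : m.map Prod.snd = ν) :
    ∫⁻ p, ENNReal.ofReal (-(p.1 * p.2)) ∂(mc μ ν) ≤ ∫⁻ p, ENNReal.ofReal (-(p.1 * p.2)) ∂m := by
  have : IsProbabilityMeasure m := coupling_prob hf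
  rw [neg_part_eq m, neg_part_eq (mc μ ν)]
  refine add_le_add ?_ ?_
  · refine lintegral_mono fun q => ?_
    rw [map_neg2_corner m q, map_neg2_corner (mc μ ν) q]
    exact cmp_mixed hf hs q.1 (-q.2)
  · refine lintegral_mono fun q => ?_
    rw [map_neg1_corner m q, map_neg1_corner (mc μ ν) q, mc_swap]
    exact cmp_mixed (swap_coupling_fst hs) (swap_coupling_snd hf) q.2 (-q.1)

lemma lint_sq_fst (hf : m.map Prod.fst = μ) (hi : Integrable (fun x => x^2) μ) :
    ∫⁻ p, ENNReal.ofReal (p.1^2) ∂m < ∞ := by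
  have h := lintegral_map (μ := m) (f := fun x : ℝ => ENNReal.ofReal (x^2))
    ((measurable_id.pow_const 2).ennreal_ofReal) measurable_fst
  rw [hf] at h
  rw [← h, ← hasFiniteIntegral_iff_ofReal (Eventually.of_forall (fun x => sq_nonneg x))]
  exact hi.hasFiniteIntegral

lemma lint_sq_snd (hs : m.map Prod.snd = ν) (hi : Integrable (fun x => x^2) ν) :
    ∫⁻ p, ENNReal.ofReal (p.2^2) ∂m < ∞ := by
  have h := lintegral_map (μ := m) (f := fun x : ℝ => ENNReal.ofReal (x^2))
    ((measurable_id.pow_const 2).ennreal_ofReal) measurable_snd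
  rw [hs] at h
  rw [← h, ← hasFiniteIntegral_iff_ofReal (Eventually.of_forall (fun x => sq_nonneg x))]
  exact hi.hasFiniteIntegral

lemma ofReal_mul_le_sq (x y : ℝ) :
    ENNReal.ofReal (x * y) ≤ ENNReal.ofReal (x^2) + ENNReal.ofReal (y^2) := by
  rw [← ENNReal.ofReal_add (sq_nonneg x) (sq_nonneg y)]
  exact ENNReal.ofReal_le_ofReal (by nlinarith [sq_nonneg (x - y)])

lemma lintA_fin (hf : m.map Prod.fst = μ) (hs : m.map Prod.snd = ν)
    (hi : Integrable (fun x => x^2) μ) (hj : Integrable (fun x => x^2) ν) :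
    ∫⁻ p, ENNReal.ofReal (p.1 * p.2) ∂m < ∞ := by
  refine lt_of_le_of_lt (lintegral_mono fun p => ofReal_mul_le_sq p.1 p.2) ?_
  rw [lintegral_add_left ((measurable_fst.pow_const 2).ennreal_ofReal)]
  exact ENNReal.add_lt_top.2 ⟨lint_sq_fst hf hi, lint_sq_snd hs hj⟩

lemma lintB_fin (hf : m.map Prod.fst = μ) (hs : m.map Prod.snd = ν)
    (hi : Integrable (fun x => x^2) μ) (hj : Integrable (fun x => x^2) ν) :
    ∫⁻ p, ENNReal.ofReal (-(p.1 * p.2)) ∂m < ∞ := by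
  have hb : ∀ p : ℝ × ℝ, ENNReal.ofReal (-(p.1 * p.2))
      ≤ ENNReal.ofReal (p.1^2) + ENNReal.ofReal (p.2^2) := by
    intro p
    have := ofReal_mul_le_sq (-p.1) p.2
    rw [neg_mul] at this
    simpa [neg_sq] using this
  refine lt_of_le_of_lt (lintegral_mono hb) ?_
  rw [lintegral_add_left ((measurable_fst.pow_const 2).ennreal_ofReal)]
  exact ENNReal.add_lt_top.2 ⟨lint_sq_fst hf hi, lint_sq_snd hs hj⟩

lemma integrable_mul (hf : m.map Prod.fst = μ) (hs : m.map Prod.snd = ν)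
    (hi : Integrable (fun x => x^2) μ) (hj : Integrable (fun x => x^2) ν) :
    Integrable (fun p : ℝ × ℝ => p.1 * p.2) m := by
  have : IsProbabilityMeasure m := coupling_prob hf
  have h1 : Integrable (fun p : ℝ × ℝ => p.1^2) m := by
    have := (integrable_map_measure (f := Prod.fst) (g := fun x : ℝ => x^2) (μ := m)
      (by fun_prop) measurable_fst.aemeasurable).1 (hf.symm ▸ hi)
    exact this
  have h2 : Integrable (fun p : ℝ × ℝ => p.2^2) m := by
    have := (integrable_map_measure (f := Prod.snd) (g := fun x : ℝ => x^2) (μ := m)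
      (by fun_prop) measurable_snd.aemeasurable).1 (hs.symm ▸ hj)
    exact this
  refine (h1.add h2).mono' ((measurable_fst.mul measurable_snd).aestronglyMeasurable) ?_
  refine Eventually.of_forall fun p => ?_
  have : |p.1 * p.2| ≤ p.1^2 + p.2^2 := by
    rw [abs_mul]
    nlinarith [sq_nonneg (|p.1| - |p.2|), abs_nonneg p.1, abs_nonneg p.2, sq_abs p.1, sq_abs p.2]
  simpa [Real.norm_eq_abs, abs_mul] using this

lemma integrable_sq_fst (hf : m.map Prod.fst = μ) (hi : Integrable (fun x => x^2) μ) :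
    Integrable (fun p : ℝ × ℝ => p.1^2) m := by
  have := (integrable_map_measure (f := Prod.fst) (g := fun x : ℝ => x^2) (μ := m)
    (by fun_prop) measurable_fst.aemeasurable).1 (hf.symm ▸ hi)
  exact this

lemma integrable_sq_snd (hs : m.map Prod.snd = ν) (hj : Integrable (fun x => x^2) ν) :
    Integrable (fun p : ℝ × ℝ => p.2^2) m := by
  have := (integrable_map_measure (f := Prod.snd) (g := fun x : ℝ => x^2) (μ := m)
    (by fun_prop) measurable_snd.aemeasurable).1 (hs.symm ▸ hj)
  exact this

/-- key comparison: the monotone coupling maximizes `E[XY]`. -/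
lemma intmul_le (hf : m.map Prod.fst = μ) (hs : m.map Prod.snd = ν)
    (hi : Integrable (fun x => x^2) μ) (hj : Integrable (fun x => x^2) ν) :
    ∫ p, p.1 * p.2 ∂m ≤ ∫ p, p.1 * p.2 ∂(mc μ ν) := by
  have : IsProbabilityMeasure m := coupling_prob hf
  rw [integral_eq_lintegral_pos_part_sub_lintegral_neg_part (integrable_mul hf hs hi hj),
    integral_eq_lintegral_pos_part_sub_lintegral_neg_part (integrable_mul mc_fst mc_snd hi hj)]
  refine sub_le_sub ?_ ?_
  · exact ENNReal.toReal_mono (ne_of_lt (lintA_fin mc_fst mc_snd hi hj)) (cmpA hf hs)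
  · exact ENNReal.toReal_mono (ne_of_lt (lintB_fin hf hs hi hj)) (cmpB hf hs)

end Part6

section Part7
variable {μ ν : MeasureTheory.Measure ℝ} [IsProbabilityMeasure μ] [IsProbabilityMeasure ν]
variable {m : MeasureTheory.Measure (ℝ × ℝ)}

lemma intsq_expand (hf : m.map Prod.fst = μ) (hs : m.map Prod.snd = ν)
    (hi : Integrable (fun x => x^2) μ) (hj : Integrable (fun x => x^2) ν) :
    ∫ p, (p.1 - p.2)^2 ∂m
      = (∫ x, x^2 ∂μ) + (∫ x, x^2 ∂ν) - 2 * ∫ p, p.1 * p.2 ∂m := by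
  have : IsProbabilityMeasure m := coupling_prob hf
  have h1 := integrable_sq_fst hf hi
  have h2 := integrable_sq_snd hs hj
  have h3 := integrable_mul hf hs hi hj
  have hfst : ∫ p, p.1^2 ∂m = ∫ x, x^2 ∂μ := by
    rw [← hf, integral_map measurable_fst.aemeasurable (by fun_prop)]
  have hsnd : ∫ p, p.2^2 ∂m = ∫ x, x^2 ∂ν := by
    rw [← hs, integral_map measurable_snd.aemeasurable (by fun_prop)]
  have hpt : (fun p : ℝ × ℝ => (p.1 - p.2)^2)
      = fun p : ℝ × ℝ => (p.1^2 + p.2^2) - 2 * (p.1 * p.2) := by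
    funext p; ring
  have h12 : Integrable (fun p : ℝ × ℝ => p.1^2 + p.2^2) m := h1.add h2
  have h32 : Integrable (fun p : ℝ × ℝ => 2 * (p.1 * p.2)) m := h3.const_mul 2
  rw [hpt, integral_sub h12 h32, integral_add h1 h2, MeasureTheory.integral_const_mul, hfst, hsnd]

lemma intsq_ge (hf : m.map Prod.fst = μ) (hs : m.map Prod.snd = ν)
    (hi : Integrable (fun x => x^2) μ) (hj : Integrable (fun x => x^2) ν) :
    ∫ p, (p.1 - p.2)^2 ∂(mc μ ν) ≤ ∫ p, (p.1 - p.2)^2 ∂m := by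
  rw [intsq_expand hf hs hi hj, intsq_expand (μ := μ) (ν := ν) mc_fst mc_snd hi hj]
  have := intmul_le hf hs hi hj
  linarith

end Part7

noncomputable def Wsq (μ ν : MeasureTheory.Measure ℝ) : ℝ :=
  sInf { c : ℝ | ∃ m : MeasureTheory.Measure (ℝ × ℝ),
    m.map Prod.fst = μ ∧ m.map Prod.snd = ν ∧ c = ∫ p, (p.1 - p.2) ^ 2 ∂m }

/-- Quadratic Wasserstein distance. -/
noncomputable def W2 (μ ν : MeasureTheory.Measure ℝ) : ℝ := Real.sqrt (Wsq μ ν)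

/-- Finite second moment. -/
def FiniteSecondMoment (μ : MeasureTheory.Measure ℝ) : Prop :=
  MeasureTheory.Integrable (fun x => x ^ 2) μ

section Part8
variable {μ ν : MeasureTheory.Measure ℝ} [IsProbabilityMeasure μ] [IsProbabilityMeasure ν]

lemma Wsq_eq_mc (hi : Integrable (fun x => x^2) μ) (hj : Integrable (fun x => x^2) ν) :
    Wsq μ ν = ∫ p, (p.1 - p.2)^2 ∂(mc μ ν) := by
  set c₀ := ∫ p, (p.1 - p.2)^2 ∂(mc μ ν) with hc₀
  have hmem : c₀ ∈ { c : ℝ | ∃ m : MeasureTheory.Measure (ℝ × ℝ),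
      m.map Prod.fst = μ ∧ m.map Prod.snd = ν ∧ c = ∫ p, (p.1 - p.2) ^ 2 ∂m } :=
    ⟨mc μ ν, mc_fst, mc_snd, rfl⟩
  have hlb : ∀ c ∈ { c : ℝ | ∃ m : MeasureTheory.Measure (ℝ × ℝ),
      m.map Prod.fst = μ ∧ m.map Prod.snd = ν ∧ c = ∫ p, (p.1 - p.2) ^ 2 ∂m }, c₀ ≤ c := by
    rintro c ⟨m, hf, hs, rfl⟩
    exact intsq_ge hf hs hi hj
  exact le_antisymm (csInf_le ⟨c₀, hlb⟩ hmem) (le_csInf ⟨c₀, hmem⟩ hlb)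

lemma Wsq_eq_qf (hi : Integrable (fun x => x^2) μ) (hj : Integrable (fun x => x^2) ν) :
    Wsq μ ν = ∫ t, (qf μ t - qf ν t)^2 ∂UU := by
  rw [Wsq_eq_mc hi hj, mc, integral_map mc_aemeasurable (f := fun p : ℝ × ℝ => (p.1 - p.2)^2)
    ((measurable_fst.sub measurable_snd).pow_const 2).aestronglyMeasurable]

end Part8

/-- The squared Wasserstein distance is a negative definite kernel on W₂(ℝ). -/
theorem Wsq_negDef (n : ℕ) (μ : Fin n → Measure ℝ)
    (hprob : ∀ i, IsProbabilityMeasure (μ i))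
    (hmom : ∀ i, FiniteSecondMoment (μ i))
    (c : Fin n → ℝ) (hc : ∑ i, c i = 0) :
    ∑ i, ∑ j, c i * c j * Wsq (μ i) (μ j) ≤ 0 := by
  classical
  set Q : Fin n → ℝ → ℝ := fun i => qf (μ i) with hQ
  have key : ∀ i j, Wsq (μ i) (μ j) = ∫ t, (Q i t - Q j t)^2 ∂UU := by
    intro i j
    haveI := hprob i; haveI := hprob j
    exact Wsq_eq_qf (hmom i) (hmom j)
  have hsq : ∀ i, Integrable (fun t => (Q i t)^2) UU := by
    intro i
    haveI := hprob i
    have h0 : Integrable (fun x : ℝ => x^2) (UU.map (qf (μ i))) := by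
      rw [UU_map_qf]; exact hmom i
    have := (integrable_map_measure ((measurable_id.pow_const 2).aestronglyMeasurable)
      (qf_aemeasurable (μ := μ i))).1 h0
    exact this
  have hmul : ∀ i j, Integrable (fun t => Q i t * Q j t) UU := by
    intro i j
    haveI := hprob i; haveI := hprob j
    refine ((hsq i).add (hsq j)).mono'
      (((qf_aemeasurable (μ := μ i)).mul (qf_aemeasurable (μ := μ j))).aestronglyMeasurable) ?_
    refine Eventually.of_forall fun t => ?_
    have : |Q i t * Q j t| ≤ (Q i t)^2 + (Q j t)^2 := by
      rw [abs_mul]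
      nlinarith [sq_nonneg (|Q i t| - |Q j t|), abs_nonneg (Q i t), abs_nonneg (Q j t),
        sq_abs (Q i t), sq_abs (Q j t)]
    simpa [Real.norm_eq_abs, abs_mul] using this
  set A : Fin n → ℝ := fun i => ∫ t, (Q i t)^2 ∂UU with hA
  set R : Fin n → Fin n → ℝ := fun i j => ∫ t, Q i t * Q j t ∂UU with hR
  have hexp : ∀ i j, Wsq (μ i) (μ j) = A i + A j - 2 * R i j := by
    intro i j
    rw [key i j]
    have hpt : (fun t => (Q i t - Q j t)^2)
        = fun t => ((Q i t)^2 + (Q j t)^2) - 2 * (Q i t * Q j t) := by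
      funext t; ring
    have h12 : Integrable (fun t => (Q i t)^2 + (Q j t)^2) UU := (hsq i).add (hsq j)
    have h32 : Integrable (fun t => 2 * (Q i t * Q j t)) UU := (hmul i j).const_mul 2
    rw [hpt, integral_sub h12 h32, integral_add (hsq i) (hsq j),
      MeasureTheory.integral_const_mul]
  have hS3 : ∫ t, (∑ i, c i * Q i t)^2 ∂UU = ∑ i, ∑ j, (c i * c j) * R i j := by
    have hpt : (fun t => (∑ i, c i * Q i t)^2)
        = fun t => ∑ i, ∑ j, (c i * c j) * (Q i t * Q j t) := by
      funext t
      rw [sq, Finset.sum_mul_sum]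
      exact Finset.sum_congr rfl fun i _ => Finset.sum_congr rfl fun j _ => by ring
    rw [hpt, integral_finset_sum _
        (fun i _ => integrable_finset_sum _ (fun j _ => (hmul i j).const_mul _))]
    refine Finset.sum_congr rfl fun i _ => ?_
    rw [integral_finset_sum _ (fun j _ => (hmul i j).const_mul _)]
    exact Finset.sum_congr rfl fun j _ => MeasureTheory.integral_const_mul _ _
  have hz1 : ∑ i, ∑ j, c i * c j * A i = 0 := by
    have h1 : ∀ i, ∑ j, c i * c j * A i = (c i * A i) * ∑ j, c j := by
      intro i
      rw [Finset.mul_sum]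
      exact Finset.sum_congr rfl fun j _ => by ring
    rw [Finset.sum_congr rfl fun i _ => h1 i]
    simp [hc]
  have hz2 : ∑ i, ∑ j, c i * c j * A j = 0 := by
    have h1 : ∀ i, ∑ j, c i * c j * A j = c i * ∑ j, c j * A j := by
      intro i
      rw [Finset.mul_sum]
      exact Finset.sum_congr rfl fun j _ => by ring
    rw [Finset.sum_congr rfl fun i _ => h1 i, ← Finset.sum_mul]
    simp [hc]
  have hsplit : ∑ i, ∑ j, c i * c j * Wsq (μ i) (μ j)
      = (∑ i, ∑ j, c i * c j * A i) + (∑ i, ∑ j, c i * c j * A j)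
        - 2 * (∑ i, ∑ j, (c i * c j) * R i j) := by
    rw [Finset.mul_sum, ← Finset.sum_add_distrib, ← Finset.sum_sub_distrib]
    refine Finset.sum_congr rfl fun i _ => ?_
    rw [Finset.mul_sum, ← Finset.sum_add_distrib, ← Finset.sum_sub_distrib]
    refine Finset.sum_congr rfl fun j _ => ?_
    rw [hexp i j]
    ring
  rw [hsplit, hz1, hz2, ← hS3]
  have : 0 ≤ ∫ t, (∑ i, c i * Q i t)^2 ∂UU := integral_nonneg fun t => sq_nonneg _
  linarith
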